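/- Let n ≥ 1, let c : [3]^n → {0,1} be a 2-colouring, and suppose there exists a set T_0 ⊆ [n-1] with |T_0| ≥ 4 such that the colour of a word depends only on its contracted pattern among the five patterns s_1 = 132, s_2 = 1232, s_3 = 1312, s_4 = 13232, s_5 = 13132: that is, whenever w, w' ∈ [3]^n satisfy T(w) ⊆ T_0, T(w') ⊆ T_0 and \overline{w} = \overline{w'} = s_i for some i ∈ {1,...,5}, then c(w) = c(w'). Then there exists a monochromatic combinatorial line in [3]^n whose active coordinate set is an interval of [n]. -/

import Mathlib

/-- `L` is a combinatorial line in `[k]^n` with active coordinate set `S`. -/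
def IsCombLine {k n : ℕ} (L : Set (Fin n → Fin k)) (S : Finset (Fin n)) : Prop :=
  S.Nonempty ∧ ∃ a : Fin n → Fin k,
    L = {x | (∀ i ∉ S, x i = a i) ∧ ∀ i ∈ S, ∀ j ∈ S, x i = x j}

/-- `S ⊆ [n]` is an interval `{l, l+1, …, m}`. -/
def IsIntervalSet {n : ℕ} (S : Finset (Fin n)) : Prop :=
  ∃ l m : Fin n, l ≤ m ∧ S = Finset.Icc l m

/-- The set of breakpoints `T(w) ⊆ {1,…,n-1}` of a word `w ∈ [3]^n`: `a` is a breakpoint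
iff `1 ≤ a < n` and the (1-based) letters at positions `a` and `a+1` differ (coordinate
`i : Fin n` encodes 1-based position `i+1`). -/
def breakpoints {n : ℕ} (w : Fin n → Fin 3) : Set ℕ :=
  {a | ∃ h : 1 ≤ a ∧ a < n,
    w ⟨a - 1, lt_of_le_of_lt (Nat.sub_le a 1) h.2⟩ ≠ w ⟨a, h.2⟩}

/-- The contracted word `w̄`, obtained by contracting each maximal constant run of `w`
to a single letter. -/
def contractWord {n : ℕ} (w : Fin n → Fin 3) : List (Fin 3) :=
  (List.ofFn w).destutter (· ≠ ·)

/-- The five patterns `s₁ = 132`, `s₂ = 1232`, `s₃ = 1312`, `s₄ = 13232`, `s₅ = 13132`,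
with letters `1,2,3` encoded as `0,1,2 : Fin 3`. -/
def pattern : Fin 5 → List (Fin 3)
  | 0 => [0, 2, 1]
  | 1 => [0, 1, 2, 1]
  | 2 => [0, 2, 0, 1]
  | 3 => [0, 2, 1, 2, 1]
  | 4 => [0, 2, 0, 2, 1]

namespace MonoLineAux

lemma destutter'_rep (a : Fin 3) (k : ℕ) (l : List (Fin 3)) :
    List.destutter' (· ≠ ·) a (List.replicate k a ++ l) = List.destutter' (· ≠ ·) a l := by
  induction k with
  | zero => simp
  | succ k ih =>
    rw [List.replicate_succ, List.cons_append, List.destutter'_cons,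
      if_neg (show ¬(a ≠ a) by simp)]
    exact ih

lemma destutter'_rep' (a b : Fin 3) (k : ℕ) (hk : 1 ≤ k) (l : List (Fin 3)) :
    List.destutter' (· ≠ ·) a (List.replicate k b ++ l)
      = List.destutter' (· ≠ ·) a (b :: l) := by
  cases k with
  | zero => omega
  | succ k =>
    rw [List.replicate_succ, List.cons_append, List.destutter'_cons, List.destutter'_cons]
    split_ifs with h
    · rw [destutter'_rep]
    · push_neg at h
      subst h
      rw [destutter'_rep]

/-- Block index of coordinate `i` for the subdivision at `t₁ < t₂ < t₃ < t₄`. -/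
def blk (t₁ t₂ t₃ t₄ : ℕ) (i : ℕ) : Fin 5 :=
  if i < t₁ then 0 else if i < t₂ then 1 else if i < t₃ then 2 else if i < t₄ then 3 else 4

/-- The blocky word with block letters `b`. -/
def wrd (t₁ t₂ t₃ t₄ n : ℕ) (b : Fin 5 → Fin 3) : Fin n → Fin 3 :=
  fun i => b (blk t₁ t₂ t₃ t₄ i.val)

lemma ofFn_wrd {t₁ t₂ t₃ t₄ n : ℕ} (h12 : t₁ ≤ t₂) (h23 : t₂ ≤ t₃) (h34 : t₃ ≤ t₄)
    (h4 : t₄ ≤ n) (b : Fin 5 → Fin 3) :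
    List.ofFn (wrd t₁ t₂ t₃ t₄ n b) =
      List.replicate t₁ (b 0) ++ List.replicate (t₂ - t₁) (b 1) ++
        List.replicate (t₃ - t₂) (b 2) ++ List.replicate (t₄ - t₃) (b 3) ++
        List.replicate (n - t₄) (b 4) := by
  apply List.ext_getElem
  · simp only [List.length_ofFn, List.length_append, List.length_replicate]; omega
  intro i h₁ h₂
  simp only [List.length_ofFn] at h₁
  rw [List.getElem_ofFn]
  show b (blk t₁ t₂ t₃ t₄ i) = _
  rcases (by omega : i < t₁ ∨ (t₁ ≤ i ∧ i < t₂) ∨ (t₂ ≤ i ∧ i < t₃) ∨ (t₃ ≤ i ∧ i < t₄)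
      ∨ (t₄ ≤ i ∧ i < n)) with h | h | h | h | h
  · rw [List.getElem_append_left (by simp only [List.length_append, List.length_replicate]; omega),
      List.getElem_append_left (by simp only [List.length_append, List.length_replicate]; omega),
      List.getElem_append_left (by simp only [List.length_append, List.length_replicate]; omega),
      List.getElem_append_left (by simp only [List.length_replicate]; omega),
      List.getElem_replicate]
    unfold blk; rw [if_pos h]
  · rw [List.getElem_append_left (by simp only [List.length_append, List.length_replicate]; omega),
      List.getElem_append_left (by simp only [List.length_append, List.length_replicate]; omega),
      List.getElem_append_left (by simp only [List.length_append, List.length_replicate]; omega),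
      List.getElem_append_right (by simp only [List.length_replicate]; omega),
      List.getElem_replicate]
    unfold blk; rw [if_neg (by omega), if_pos (by omega)]
  · rw [List.getElem_append_left (by simp only [List.length_append, List.length_replicate]; omega),
      List.getElem_append_left (by simp only [List.length_append, List.length_replicate]; omega),
      List.getElem_append_right (by simp only [List.length_append, List.length_replicate]; omega),
      List.getElem_replicate]
    unfold blk; rw [if_neg (by omega), if_neg (by omega), if_pos (by omega)]
  · rw [List.getElem_append_left (by simp only [List.length_append, List.length_replicate]; omega),
      List.getElem_append_right (by simp only [List.length_append, List.length_replicate]; omega),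
      List.getElem_replicate]
    unfold blk; rw [if_neg (by omega), if_neg (by omega), if_neg (by omega), if_pos (by omega)]
  · rw [List.getElem_append_right (by simp only [List.length_append, List.length_replicate]; omega),
      List.getElem_replicate]
    unfold blk
    rw [if_neg (by omega), if_neg (by omega), if_neg (by omega), if_neg (by omega)]

lemma contract_wrd {t₁ t₂ t₃ t₄ n : ℕ} (h1 : 1 ≤ t₁) (h12 : t₁ < t₂) (h23 : t₂ < t₃)
    (h34 : t₃ < t₄) (h4 : t₄ < n) (b : Fin 5 → Fin 3) :
    contractWord (wrd t₁ t₂ t₃ t₄ n b)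
      = List.destutter (· ≠ ·) [b 0, b 1, b 2, b 3, b 4] := by
  rw [contractWord, ofFn_wrd (by omega) (by omega) (by omega) (by omega)]
  rw [List.append_assoc, List.append_assoc, List.append_assoc]
  obtain ⟨k, hk⟩ : ∃ k, t₁ = k + 1 := ⟨t₁ - 1, by omega⟩
  subst hk
  rw [List.replicate_succ, List.cons_append, List.destutter_cons', List.destutter_cons',
    destutter'_rep]
  have e1 : ∀ (a : Fin 3) (l : List (Fin 3)),
      List.destutter' (· ≠ ·) a (List.replicate (t₂ - (k + 1)) (b 1) ++ l)
        = List.destutter' (· ≠ ·) a (b 1 :: l) :=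
    fun a l => destutter'_rep' a (b 1) _ (by omega) l
  have e2 : ∀ (a : Fin 3) (l : List (Fin 3)),
      List.destutter' (· ≠ ·) a (List.replicate (t₃ - t₂) (b 2) ++ l)
        = List.destutter' (· ≠ ·) a (b 2 :: l) :=
    fun a l => destutter'_rep' a (b 2) _ (by omega) l
  have e3 : ∀ (a : Fin 3) (l : List (Fin 3)),
      List.destutter' (· ≠ ·) a (List.replicate (t₄ - t₃) (b 3) ++ l)
        = List.destutter' (· ≠ ·) a (b 3 :: l) :=
    fun a l => destutter'_rep' a (b 3) _ (by omega) l
  have e4 : ∀ (a : Fin 3),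
      List.destutter' (· ≠ ·) a (List.replicate (n - t₄) (b 4) ++ [])
        = List.destutter' (· ≠ ·) a [b 4] :=
    fun a => destutter'_rep' a (b 4) _ (by omega) []
  rw [show List.replicate (n - t₄) (b 4) = List.replicate (n - t₄) (b 4) ++ [] by simp]
  simp only [List.destutter'_cons, List.destutter'_nil, e1, e2, e3, e4]

lemma breakpoints_wrd {t₁ t₂ t₃ t₄ n : ℕ} (b : Fin 5 → Fin 3) :
    breakpoints (wrd t₁ t₂ t₃ t₄ n b) ⊆ {t₁, t₂, t₃, t₄} := by
  rintro a ⟨⟨ha1, ha2⟩, hne⟩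
  simp only [Set.mem_insert_iff, Set.mem_singleton_iff]
  by_contra h
  push_neg at h
  obtain ⟨e1, e2, e3, e4⟩ := h
  apply hne
  show b (blk t₁ t₂ t₃ t₄ (a - 1)) = b (blk t₁ t₂ t₃ t₄ a)
  congr 1
  unfold blk
  split_ifs <;> first | rfl | (exfalso; omega)

lemma exists_mono_line {t₁ t₂ t₃ t₄ n : ℕ} (c : (Fin n → Fin 3) → Fin 2) (j : Fin 5)
    (lo hi : ℕ) (hlo : lo < n) (hhi : hi < n) (hlohi : lo ≤ hi)
    (hblk : ∀ i : ℕ, i < n → (blk t₁ t₂ t₃ t₄ i = j ↔ (lo ≤ i ∧ i ≤ hi)))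
    (b : Fin 5 → Fin 3) (d : Fin 2)
    (hmc : ∀ v : Fin 3, c (wrd t₁ t₂ t₃ t₄ n (Function.update b j v)) = d) :
    ∃ (L : Set (Fin n → Fin 3)) (S : Finset (Fin n)),
      IsCombLine L S ∧ IsIntervalSet S ∧ ∀ x ∈ L, ∀ y ∈ L, c x = c y := by
  set S : Finset (Fin n) := Finset.Icc ⟨lo, hlo⟩ ⟨hi, hhi⟩ with hS
  have hmem : ∀ i : Fin n, i ∈ S ↔ blk t₁ t₂ t₃ t₄ i.val = j := by
    intro i
    rw [hS, Finset.mem_Icc, hblk i.val i.isLt]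
    simp [Fin.le_def]
  set a : Fin n → Fin 3 := wrd t₁ t₂ t₃ t₄ n b with ha
  set L : Set (Fin n → Fin 3) :=
    {x | (∀ i ∉ S, x i = a i) ∧ ∀ i ∈ S, ∀ j ∈ S, x i = x j} with hL
  have hloS : (⟨lo, hlo⟩ : Fin n) ∈ S := by
    rw [hS, Finset.mem_Icc]
    exact ⟨le_refl _, by simpa [Fin.le_def] using hlohi⟩
  have key : ∀ x ∈ L, ∃ v : Fin 3, x = wrd t₁ t₂ t₃ t₄ n (Function.update b j v) := by
    rintro x ⟨hfix, hconst⟩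
    refine ⟨x ⟨lo, hlo⟩, funext fun i => ?_⟩
    by_cases hib : blk t₁ t₂ t₃ t₄ i.val = j
    · have hiS : i ∈ S := (hmem i).2 hib
      rw [hconst i hiS ⟨lo, hlo⟩ hloS]
      show _ = Function.update b j _ (blk t₁ t₂ t₃ t₄ i.val)
      rw [hib, Function.update_self]
    · have hiS : i ∉ S := fun h => hib ((hmem i).1 h)
      rw [hfix i hiS]
      show b (blk t₁ t₂ t₃ t₄ i.val) = Function.update b j _ (blk t₁ t₂ t₃ t₄ i.val)
      rw [Function.update_of_ne hib]
  refine ⟨L, S, ⟨⟨⟨lo, hlo⟩, hloS⟩, a, rfl⟩,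
    ⟨⟨lo, hlo⟩, ⟨hi, hhi⟩, by simpa [Fin.le_def] using hlohi, rfl⟩, ?_⟩
  intro x hx y hy
  obtain ⟨v, rfl⟩ := key x hx
  obtain ⟨v', rfl⟩ := key y hy
  rw [hmc, hmc]

/-- Canonical block letters realising each of the five patterns. -/
def canon : Fin 5 → Fin 5 → Fin 3 :=
  ![![0, 0, 2, 2, 1], ![0, 1, 1, 2, 1], ![0, 2, 0, 0, 1], ![0, 2, 1, 2, 1], ![0, 2, 0, 2, 1]]

end MonoLineAux

open MonoLineAux in
/-- If the colour of any word with breakpoints inside a 4-element set `T₀ ⊆ {1,…,n-1}`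
depends only on its contracted pattern among `s₁,…,s₅`, then there is a monochromatic
combinatorial line whose active coordinate set is an interval. -/
theorem mono_interval_line_of_pattern_colouring (n : ℕ) (hn : 1 ≤ n)
    (c : (Fin n → Fin 3) → Fin 2) (T₀ : Finset ℕ) (hT₀ : T₀ ⊆ Finset.Ico 1 n)
    (hcard : 4 ≤ T₀.card)
    (hc : ∀ (i : Fin 5) (w w' : Fin n → Fin 3),
      breakpoints w ⊆ ↑T₀ → breakpoints w' ⊆ ↑T₀ →
      contractWord w = pattern i → contractWord w' = pattern i → c w = c w') :
    ∃ (L : Set (Fin n → Fin 3)) (S : Finset (Fin n)),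
      IsCombLine L S ∧ IsIntervalSet S ∧ ∀ x ∈ L, ∀ y ∈ L, c x = c y := by
  classical
  obtain ⟨s, hsT, hs4⟩ := Finset.exists_subset_card_eq (s := T₀) (n := 4) hcard
  let f := s.orderIsoOfFin hs4
  have hmemT : ∀ j : Fin 4, ((f j : {x // x ∈ s}) : ℕ) ∈ T₀ := fun j => hsT (f j).2
  have hlt : ∀ j k : Fin 4, j < k → ((f j : {x // x ∈ s}) : ℕ) < ((f k : {x // x ∈ s}) : ℕ) :=
    fun j k h => Subtype.coe_lt_coe.2 (f.lt_iff_lt.2 h)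
  set t₁ := ((f 0 : {x // x ∈ s}) : ℕ) with ht₁
  set t₂ := ((f 1 : {x // x ∈ s}) : ℕ) with ht₂
  set t₃ := ((f 2 : {x // x ∈ s}) : ℕ) with ht₃
  set t₄ := ((f 3 : {x // x ∈ s}) : ℕ) with ht₄
  have h1 : 1 ≤ t₁ := (Finset.mem_Ico.1 (hT₀ (hmemT 0))).1
  have h12 : t₁ < t₂ := hlt 0 1 (by decide)
  have h23 : t₂ < t₃ := hlt 1 2 (by decide)
  have h34 : t₃ < t₄ := hlt 2 3 (by decide)
  have h4n : t₄ < n := (Finset.mem_Ico.1 (hT₀ (hmemT 3))).2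
  -- breakpoints of any blocky word lie in T₀
  have hbk : ∀ b, breakpoints (wrd t₁ t₂ t₃ t₄ n b) ⊆ ↑T₀ := by
    intro b
    refine (breakpoints_wrd b).trans ?_
    intro x hx
    simp only [Set.mem_insert_iff, Set.mem_singleton_iff] at hx
    rcases hx with rfl | rfl | rfl | rfl
    · exact hmemT 0
    · exact hmemT 1
    · exact hmemT 2
    · exact hmemT 3
  have hcontract : ∀ b, contractWord (wrd t₁ t₂ t₃ t₄ n b)
      = List.destutter (· ≠ ·) [b 0, b 1, b 2, b 3, b 4] :=
    contract_wrd h1 h12 h23 h34 h4n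
  -- words realising pattern i have the colour of the canonical word for pattern i
  have hpat : ∀ (i : Fin 5) (b : Fin 5 → Fin 3),
      List.destutter (· ≠ ·) [b 0, b 1, b 2, b 3, b 4] = pattern i →
      c (wrd t₁ t₂ t₃ t₄ n b) = c (wrd t₁ t₂ t₃ t₄ n (canon i)) := by
    intro i b hb
    refine hc i _ _ (hbk b) (hbk (canon i)) ((hcontract b).trans hb)
      ((hcontract (canon i)).trans ?_)
    fin_cases i <;> decide
  -- the three interval block characterisations
  have hblk1 : ∀ i : ℕ, i < n → (blk t₁ t₂ t₃ t₄ i = 1 ↔ (t₁ ≤ i ∧ i ≤ t₂ - 1)) := by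
    intro i hi; unfold blk; split_ifs <;> simp [Fin.ext_iff] <;> omega
  have hblk2 : ∀ i : ℕ, i < n → (blk t₁ t₂ t₃ t₄ i = 2 ↔ (t₂ ≤ i ∧ i ≤ t₃ - 1)) := by
    intro i hi; unfold blk; split_ifs <;> simp [Fin.ext_iff] <;> omega
  have hblk3 : ∀ i : ℕ, i < n → (blk t₁ t₂ t₃ t₄ i = 3 ↔ (t₃ ≤ i ∧ i ≤ t₄ - 1)) := by
    intro i hi; unfold blk; split_ifs <;> simp [Fin.ext_iff] <;> omega
  by_cases h01 : c (wrd t₁ t₂ t₃ t₄ n (canon 1)) = c (wrd t₁ t₂ t₃ t₄ n (canon 0))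
  · -- line C : (1,1,·,3,2), active block 2
    refine exists_mono_line c 2 t₂ (t₃ - 1) (by omega) (by omega) (by omega) hblk2
      ![0, 0, 0, 2, 1] (c (wrd t₁ t₂ t₃ t₄ n (canon 0))) ?_
    intro v
    fin_cases v
    · exact hpat 0 _ (by decide)
    · exact (hpat 1 _ (by decide)).trans h01
    · exact hpat 0 _ (by decide)
  by_cases h02 : c (wrd t₁ t₂ t₃ t₄ n (canon 2)) = c (wrd t₁ t₂ t₃ t₄ n (canon 0))
  · -- line B : (1,3,·,2,2), active block 2
    refine exists_mono_line c 2 t₂ (t₃ - 1) (by omega) (by omega) (by omega) hblk2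
      ![0, 2, 0, 1, 1] (c (wrd t₁ t₂ t₃ t₄ n (canon 0))) ?_
    intro v
    fin_cases v
    · exact (hpat 2 _ (by decide)).trans h02
    · exact hpat 0 _ (by decide)
    · exact hpat 0 _ (by decide)
  by_cases h13 : c (wrd t₁ t₂ t₃ t₄ n (canon 3)) = c (wrd t₁ t₂ t₃ t₄ n (canon 1))
  · -- line I : (1,·,2,3,2), active block 1
    refine exists_mono_line c 1 t₁ (t₂ - 1) (by omega) (by omega) (by omega) hblk1
      ![0, 0, 1, 2, 1] (c (wrd t₁ t₂ t₃ t₄ n (canon 1))) ?_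
    intro v
    fin_cases v
    · exact hpat 1 _ (by decide)
    · exact hpat 1 _ (by decide)
    · exact (hpat 3 _ (by decide)).trans h13
  by_cases h24 : c (wrd t₁ t₂ t₃ t₄ n (canon 4)) = c (wrd t₁ t₂ t₃ t₄ n (canon 2))
  · -- line J : (1,3,1,·,2), active block 3
    refine exists_mono_line c 3 t₃ (t₄ - 1) (by omega) (by omega) (by omega) hblk3
      ![0, 2, 0, 0, 1] (c (wrd t₁ t₂ t₃ t₄ n (canon 2))) ?_
    intro v
    fin_cases v
    · exact hpat 2 _ (by decide)
    · exact hpat 2 _ (by decide)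
    · exact (hpat 4 _ (by decide)).trans h24
  -- remaining case: χ₃ = χ₀ and χ₄ = χ₀; line A : (1,3,·,3,2), active block 2
  have two : ∀ a b x : Fin 2, a ≠ x → b ≠ x → a = b := by decide
  have h30 : c (wrd t₁ t₂ t₃ t₄ n (canon 3)) = c (wrd t₁ t₂ t₃ t₄ n (canon 0)) :=
    two _ _ _ h13 (Ne.symm h01)
  have h40 : c (wrd t₁ t₂ t₃ t₄ n (canon 4)) = c (wrd t₁ t₂ t₃ t₄ n (canon 0)) :=
    two _ _ _ h24 (Ne.symm h02)
  refine exists_mono_line c 2 t₂ (t₃ - 1) (by omega) (by omega) (by omega) hblk2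
    ![0, 2, 0, 2, 1] (c (wrd t₁ t₂ t₃ t₄ n (canon 0))) ?_
  intro v
  fin_cases v
  · exact (hpat 4 _ (by decide)).trans h40
  · exact (hpat 3 _ (by decide)).trans h30
  · exact hpat 0 _ (by decide)
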